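/- The Dijkstra distance update preserves the invariant: with nonnegative weights, if before selecting v* the tentative distances satisfy d(v) = min_{u ∈ S} (dist(s,u) + w(u,v)) for v ∉ S, then after adding v* to S and performing d(i) := min(d(i), d(v*) + w(v*, i)) for each neighbor i of v*, the tentative distances satisfy the same invariant with respect to S ∪ {v*}. -/

import Mathlib

open scoped ENNReal

/-- Cost of a walk given as a list of vertices, with nonnegative (possibly infinite)
edge weights; absent edges have weight ∞. -/
noncomputable def walkCost {V : Type*} (w : V → V → ℝ≥0∞) : List V → ℝ≥0∞
  | [] => 0
  | [_] => 0
  | x :: y :: rest => w x y + walkCost w (y :: rest)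

/-- Shortest-path distance from s to t. -/
noncomputable def gdist {V : Type*} (w : V → V → ℝ≥0∞) (s t : V) : ℝ≥0∞ :=
  sInf {c | ∃ l : List V, l.head? = some s ∧ l.getLast? = some t ∧ walkCost w l = c}

lemma walkCost_cons_cons {V : Type*} (w : V → V → ℝ≥0∞) (x y : V) (l : List V) :
    walkCost w (x :: y :: l) = w x y + walkCost w (y :: l) := rfl

lemma walkCost_append {V : Type*} (w : V → V → ℝ≥0∞) :
    ∀ (l : List V) (a t : V), l.getLast? = some a →
      walkCost w (l ++ [t]) = walkCost w l + w a t := by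
  intro l
  induction l with
  | nil => intro a t h; simp at h
  | cons x xs ih =>
    intro a t h
    cases xs with
    | nil =>
      simp [List.getLast?] at h
      subst h
      simp [walkCost]
    | cons y ys =>
      rw [List.getLast?_cons_cons] at h
      have := ih a t h
      rw [List.cons_append] at this
      rw [List.cons_append, List.cons_append, walkCost_cons_cons, this, walkCost_cons_cons, add_assoc]

lemma gdist_le_walkCost {V : Type*} (w : V → V → ℝ≥0∞) (s t : V) (l : List V)
    (h1 : l.head? = some s) (h2 : l.getLast? = some t) :
    gdist w s t ≤ walkCost w l :=
  sInf_le ⟨l, h1, h2, rfl⟩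

lemma gdist_self {V : Type*} (w : V → V → ℝ≥0∞) (s : V) : gdist w s s = 0 :=
  le_antisymm (sInf_le ⟨[s], rfl, rfl, rfl⟩) zero_le

lemma gdist_triangle {V : Type*} (w : V → V → ℝ≥0∞) (s u t : V) :
    gdist w s t ≤ gdist w s u + w u t := by
  conv_rhs => rw [gdist]
  rw [ENNReal.sInf_add]
  refine le_iInf₂ fun c hc => ?_
  obtain ⟨l, h1, h2, rfl⟩ := hc
  have hl : l ≠ [] := by rintro rfl; simp at h1
  refine le_trans (gdist_le_walkCost w s t (l ++ [t]) ?_ ?_) ?_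
  · rw [List.head?_append_of_ne_nil _ hl]; exact h1
  · simp
  · rw [walkCost_append w l u t h2]

/-- The Dijkstra distance update preserves the invariant: after selecting
the argmin v* ∉ S and updating d(i) := min(d(i), d(v*) + w(v*, i)), the tentative
distances satisfy the invariant with respect to S ∪ {v*}. -/
theorem stmt_19 {V : Type*} [Fintype V] [DecidableEq V] (w : V → V → ℝ≥0∞) (s : V)
    (S : Finset V) (hs : s ∈ S) (d d' : V → ℝ≥0∞)
    (hdS : ∀ u ∈ S, d u = gdist w s u)
    (hdout : ∀ v ∉ S, d v = S.inf (fun u => gdist w s u + w u v))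
    (vstar : V) (hv : vstar ∉ S) (hmin : ∀ v ∉ S, d vstar ≤ d v)
    (hd'in : ∀ u ∈ insert vstar S, d' u = d u)
    (hd'out : ∀ v ∉ insert vstar S, d' v = min (d v) (d vstar + w vstar v)) :
    (∀ u ∈ insert vstar S, d' u = gdist w s u) ∧
    (∀ v ∉ insert vstar S,
      d' v = (insert vstar S).inf (fun u => gdist w s u + w u v)) := by
  classical
  -- key crossing lemma
  have key : ∀ l : List V, ∀ a t, l.head? = some a → a ∈ S → l.getLast? = some t →
      t ∉ S → d vstar ≤ gdist w s a + walkCost w l := by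
    intro l
    induction l with
    | nil => intro a t h; simp at h
    | cons x xs ih =>
      intro a t h1 ha h2 ht
      simp at h1; subst h1
      cases xs with
      | nil =>
        simp [List.getLast?] at h2; subst h2; exact absurd ha ht
      | cons y ys =>
        rw [List.getLast?_cons_cons] at h2
        by_cases hy : y ∈ S
        · have := ih y t rfl hy h2 ht
          calc d vstar ≤ gdist w s y + walkCost w (y :: ys) := this
            _ ≤ (gdist w s x + w x y) + walkCost w (y :: ys) :=
                add_le_add (gdist_triangle w s x y) le_rfl
            _ = gdist w s x + walkCost w (x :: y :: ys) := by
                rw [walkCost_cons_cons]; ring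
        · have h3 : d vstar ≤ d y := hmin y hy
          rw [hdout y hy] at h3
          calc d vstar ≤ S.inf (fun u => gdist w s u + w u y) := h3
            _ ≤ gdist w s x + w x y := Finset.inf_le ha
            _ ≤ (gdist w s x + w x y) + walkCost w (y :: ys) := le_self_add
            _ = gdist w s x + walkCost w (x :: y :: ys) := by
                rw [walkCost_cons_cons]; ring
  have hA : d vstar = gdist w s vstar := by
    refine le_antisymm (le_sInf ?_) ?_
    · rintro c ⟨l, h1, h2, rfl⟩
      have := key l s vstar h1 hs h2 hv
      rwa [gdist_self, zero_add] at this
    · rw [hdout vstar hv]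
      exact Finset.le_inf fun u _ => gdist_triangle w s u vstar
  constructor
  · intro u hu
    rw [hd'in u hu]
    rcases Finset.mem_insert.mp hu with rfl | huS
    · exact hA
    · exact hdS u huS
  · intro v hvI
    have hvS : v ∉ S := fun h => hvI (Finset.mem_insert_of_mem h)
    rw [hd'out v hvI, Finset.inf_insert, hdout v hvS, hA]
    simp [min_comm]
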